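/- For every integer N ≥ 1 there exist polynomials G_{N,0}, G_{N,1}, G_{N,2} ∈ ℤ[X₀,X₁,X₂,X₃], each homogeneous of degree 4^N in the variables X₀, X₁, X₂ and of total degree at most 2·4^N, with the following property. For every λ ∈ ℂ with λ ≠ 0 and λ ≠ 1 and every affine point P = (x, y) on the Legendre elliptic curve W_λ : y² = x³ − (1+λ)x² + λx, setting gᵢ = G_{N,i}(x, y, 1, λ), the values g₀, g₁, g₂ are not all zero, and the point 2^N•P in the group of points of W_λ equals the affine point (g₀/g₂, g₁/g₂) if g₂ ≠ 0 and the point at infinity (zero of the group) if g₂ = 0. -/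

import Mathlib

open MvPolynomial WeierstrassCurve

/-- The Legendre elliptic curve `y² = x(x−1)(x−λ) = x³ − (1+λ)x² + λx` in affine
Weierstrass form. -/
def LegendreCurve (lam : ℂ) : WeierstrassCurve.Affine ℂ :=
  { a₁ := 0, a₂ := -(1 + lam), a₃ := 0, a₄ := lam, a₆ := 0 }

namespace Stmt5Aux


/-- weight: degree in X0,X1,X2 -/
def w1 : Fin 4 → ℕ := ![1, 1, 1, 0]

lemma weight_w1 (m : Fin 4 →₀ ℕ) : Finsupp.weight w1 m = m 0 + m 1 + m 2 := by
  rw [Finsupp.weight_apply, Finsupp.sum_fintype]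
  · simp [Fin.sum_univ_four, w1]
  · intro i; simp

/-- basic monomial -/
noncomputable def T (k : ℤ) (a b c d : ℕ) : MvPolynomial (Fin 4) ℤ :=
  monomial (Finsupp.single 0 a + Finsupp.single 1 b + Finsupp.single 2 c + Finsupp.single 3 d) k

lemma T_eq (k : ℤ) (a b c d : ℕ) :
    T k a b c d = C k * X 0 ^ a * X 1 ^ b * X 2 ^ c * X 3 ^ d := by
  simp only [T, X_pow_eq_monomial, C_apply, monomial_mul, mul_one, one_mul, zero_add]

lemma aeval_T (v : Fin 4 → ℂ) (k : ℤ) (a b c d : ℕ) :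
    aeval v (T k a b c d) = (k : ℂ) * v 0 ^ a * v 1 ^ b * v 2 ^ c * v 3 ^ d := by
  rw [T_eq]
  simp

lemma T_isWH (k : ℤ) (a b c d : ℕ) : (T k a b c d).IsWeightedHomogeneous w1 (a + b + c) := by
  apply isWeightedHomogeneous_monomial
  rw [weight_w1]
  simp [Finsupp.single_apply]

lemma T_supp3 (k : ℤ) (a b c d : ℕ) : ∀ m ∈ (T k a b c d).support, m 3 ≤ d := by
  intro m hm
  rw [T, mem_support_iff, coeff_monomial] at hm

  by_cases h : (Finsupp.single 0 a + Finsupp.single 1 b + Finsupp.single 2 c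
      + Finsupp.single (3 : Fin 4) d) = m
  · rw [← h]; simp [Finsupp.single_apply]
  · rw [if_neg h] at hm; simp at hm




/-- bound on exponent of X3 -/
def B3 (p : MvPolynomial (Fin 4) ℤ) (b : ℕ) : Prop := ∀ m ∈ p.support, m 3 ≤ b

lemma B3_mono {p b b'} (h : B3 p b) (hb : b ≤ b') : B3 p b' := fun m hm => (h m hm).trans hb

lemma B3_add {p q b} (hp : B3 p b) (hq : B3 q b) : B3 (p + q) b := by
  intro m hm
  rcases Finset.mem_union.mp (MvPolynomial.support_add hm) with h | h
  · exact hp m h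
  · exact hq m h

lemma B3_mul {p q a b} (hp : B3 p a) (hq : B3 q b) : B3 (p * q) (a + b) := by
  intro m hm
  obtain ⟨m1, h1, m2, h2, rfl⟩ := Finset.mem_add.mp (MvPolynomial.support_mul p q hm)
  exact add_le_add (hp m1 h1) (hq m2 h2)

lemma B3_pow {p a} (hp : B3 p a) (n : ℕ) : B3 (p ^ n) (n * a) := by
  induction n with
  | zero =>
      intro m hm
      rw [pow_zero, mem_support_iff, MvPolynomial.coeff_one] at hm
      by_cases h : 0 = m
      · simp [← h]
      · simp [h] at hm
  | succ n ih =>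
      rw [pow_succ, Nat.succ_mul]
      exact B3_mul ih hp

lemma B3_C (r : ℤ) : B3 (C r) 0 := by
  intro m hm
  rw [mem_support_iff, MvPolynomial.coeff_C] at hm
  by_cases h : 0 = m
  · simp [← h]
  · simp [h] at hm

lemma B3_prod {ι : Type*} (s : Finset ι) (φ : ι → MvPolynomial (Fin 4) ℤ) (b : ι → ℕ)
    (h : ∀ i ∈ s, B3 (φ i) (b i)) : B3 (∏ i ∈ s, φ i) (∑ i ∈ s, b i) := by
  classical
  induction s using Finset.induction_on with
  | empty => simpa using B3_C 1
  | insert i s his ih =>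
      rw [Finset.prod_insert his, Finset.sum_insert his]
      exact B3_mul (h i (Finset.mem_insert_self _ _)) (ih fun j hj => h j (Finset.mem_insert_of_mem hj))

lemma isWH_pow {φ : MvPolynomial (Fin 4) ℤ} {m : ℕ}
    (h : φ.IsWeightedHomogeneous w1 m) (n : ℕ) : (φ ^ n).IsWeightedHomogeneous w1 (n * m) := by
  induction n with
  | zero => simpa using isWeightedHomogeneous_one _ _
  | succ n ih =>
      rw [pow_succ, Nat.succ_mul]
      exact ih.mul h

lemma isWH_aeval {p : MvPolynomial (Fin 4) ℤ} {n : ℕ} (hp : p.IsWeightedHomogeneous w1 n)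
    (σ : Fin 4 → MvPolynomial (Fin 4) ℤ) (k : ℕ)
    (hσ : ∀ i, (σ i).IsWeightedHomogeneous w1 (k * w1 i)) :
    (aeval σ p).IsWeightedHomogeneous w1 (k * n) := by
  rw [aeval_def, eval₂_eq]
  apply IsWeightedHomogeneous.sum
  intro d hd
  have h1 : ∀ i ∈ d.support, ((σ i) ^ d i).IsWeightedHomogeneous w1 (d i * (k * w1 i)) :=
    fun i _ => isWH_pow (hσ i) (d i)
  have h2 := IsWeightedHomogeneous.prod d.support _ _ h1
  have h3 : (algebraMap ℤ (MvPolynomial (Fin 4) ℤ) (coeff d p)).IsWeightedHomogeneous w1 0 := by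
    rw [MvPolynomial.algebraMap_eq]; exact isWeightedHomogeneous_C _ _
  have h4 := h3.mul h2
  have h5 : Finsupp.weight w1 d = n := hp (mem_support_iff.mp hd)
  have h6 : 0 + (∑ i ∈ d.support, d i * (k * w1 i)) = k * n := by
    rw [zero_add, ← h5, Finsupp.weight_apply, Finsupp.sum, Finset.mul_sum]
    apply Finset.sum_congr rfl
    intro i _
    simp [smul_eq_mul]; ring
  rwa [h6] at h4

lemma B3_aeval {p : MvPolynomial (Fin 4) ℤ} (σ : Fin 4 → MvPolynomial (Fin 4) ℤ)
    (bi : Fin 4 → ℕ) (hσ : ∀ i, B3 (σ i) (bi i)) {B : ℕ}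
    (hp : ∀ d ∈ p.support, (∑ i ∈ d.support, d i * bi i) ≤ B) : B3 (aeval σ p) B := by
  rw [aeval_def, eval₂_eq]
  intro m hm
  obtain ⟨d, hd, hmd⟩ := Finset.mem_biUnion.mp (MvPolynomial.support_sum hm)
  obtain ⟨m1, h1, m2, h2, rfl⟩ := Finset.mem_add.mp (MvPolynomial.support_mul _ _ hmd)
  have hb1 : m1 3 = 0 := by
    have : m1 ∈ (C (coeff d p) : MvPolynomial (Fin 4) ℤ).support := by
      rwa [MvPolynomial.algebraMap_eq] at h1
    have := B3_C (coeff d p) m1 this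
    omega
  have hb2 := B3_prod d.support _ _ (fun i _ => B3_pow (hσ i) (d i)) m2 h2
  have := hp d hd
  simp only [Finsupp.add_apply]
  omega

noncomputable def D0 : MvPolynomial (Fin 4) ℤ :=
  T (-6) 2 1 1 1 + T 2 0 1 3 2 + T 2 1 3 0 0 + T 2 3 1 0 0 + T 2 3 1 0 1

noncomputable def D1 : MvPolynomial (Fin 4) ℤ :=
  T 6 4 0 0 1 + T (-1) 2 0 2 2 + T (-3) 3 0 1 1 + T 2 1 0 3 2 + T (-3) 3 0 1 2 +
    T 2 1 0 3 3 + T (-5) 1 2 1 1 + T (-1) 0 0 4 3 + T 1 0 4 0 0 + T (-1) 4 0 0 0 +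
    T (-1) 4 0 0 2

noncomputable def D2 : MvPolynomial (Fin 4) ℤ := T 8 0 3 1 0

noncomputable def dP : Fin 3 → MvPolynomial (Fin 4) ℤ := ![D0, D1, D2]

lemma D0_isWH : D0.IsWeightedHomogeneous w1 4 := by
  unfold D0
  repeat' apply IsWeightedHomogeneous.add
  all_goals exact T_isWH ..

lemma D1_isWH : D1.IsWeightedHomogeneous w1 4 := by
  unfold D1
  repeat' apply IsWeightedHomogeneous.add
  all_goals exact T_isWH ..

lemma D2_isWH : D2.IsWeightedHomogeneous w1 4 := by
  unfold D2
  exact T_isWH ..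

lemma dP_isWH : ∀ i, (dP i).IsWeightedHomogeneous w1 4 := by
  intro i
  fin_cases i
  exacts [D0_isWH, D1_isWH, D2_isWH]

lemma B3_T (k : ℤ) (a b c d : ℕ) (hd : d ≤ 3) : B3 (T k a b c d) 3 :=
  fun m hm => (T_supp3 k a b c d m hm).trans hd

lemma dP_B3 : ∀ i, B3 (dP i) 3 := by
  have h0 : B3 D0 3 := by
    unfold D0
    repeat' apply B3_add
    all_goals exact B3_T _ _ _ _ _ (by norm_num)
  have h1 : B3 D1 3 := by
    unfold D1
    repeat' apply B3_add
    all_goals exact B3_T _ _ _ _ _ (by norm_num)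
  have h2 : B3 D2 3 := by
    unfold D2
    exact B3_T _ _ _ _ _ (by norm_num)
  intro i
  fin_cases i
  exacts [h0, h1, h2]

lemma aeval_dP0 (v : Fin 4 → ℂ) : aeval v (dP 0) =
    -6 * v 0 ^ 2 * v 1 * v 2 * v 3 + 2 * v 1 * v 2 ^ 3 * v 3 ^ 2 + 2 * v 0 * v 1 ^ 3 +
      2 * v 0 ^ 3 * v 1 + 2 * v 0 ^ 3 * v 1 * v 3 := by
  simp only [dP, D0, Matrix.cons_val_zero, map_add, aeval_T]
  push_cast
  ring

lemma aeval_dP1 (v : Fin 4 → ℂ) : aeval v (dP 1) =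
    6 * v 0 ^ 4 * v 3 - v 0 ^ 2 * v 2 ^ 2 * v 3 ^ 2 - 3 * v 0 ^ 3 * v 2 * v 3 +
      2 * v 0 * v 2 ^ 3 * v 3 ^ 2 - 3 * v 0 ^ 3 * v 2 * v 3 ^ 2 + 2 * v 0 * v 2 ^ 3 * v 3 ^ 3 -
      5 * v 0 * v 1 ^ 2 * v 2 * v 3 - v 2 ^ 4 * v 3 ^ 3 + v 1 ^ 4 - v 0 ^ 4 - v 0 ^ 4 * v 3 ^ 2 := by
  rw [show dP 1 = D1 from rfl]
  simp only [dP, D1, Matrix.cons_val_one, Matrix.head_cons, map_add, aeval_T]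
  push_cast
  ring

lemma aeval_dP2 (v : Fin 4 → ℂ) : aeval v (dP 2) = 8 * v 1 ^ 3 * v 2 := by
  simp only [dP, D2, Matrix.cons_val_two, Matrix.tail_cons, Matrix.head_cons, aeval_T]
  push_cast
  ring

lemma dP_scale (t a b c lam : ℂ) (i : Fin 3) :
    aeval ![t * a, t * b, t * c, lam] (dP i) = t ^ 4 * aeval ![a, b, c, lam] (dP i) := by
  have h0 := fun v : Fin 4 → ℂ => aeval_dP0 v
  have e0 : aeval ![t * a, t * b, t * c, lam] (dP 0) = t ^ 4 * aeval ![a, b, c, lam] (dP 0) := by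
    rw [aeval_dP0, aeval_dP0]
    simp only [Matrix.cons_val_zero, Matrix.cons_val_one, Matrix.head_cons, Matrix.cons_val_two,
      Matrix.tail_cons, Matrix.cons_val_three]
    ring
  have e1 : aeval ![t * a, t * b, t * c, lam] (dP 1) = t ^ 4 * aeval ![a, b, c, lam] (dP 1) := by
    rw [aeval_dP1, aeval_dP1]
    simp only [Matrix.cons_val_zero, Matrix.cons_val_one, Matrix.head_cons, Matrix.cons_val_two,
      Matrix.tail_cons, Matrix.cons_val_three]
    ring
  have e2 : aeval ![t * a, t * b, t * c, lam] (dP 2) = t ^ 4 * aeval ![a, b, c, lam] (dP 2) := by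
    rw [aeval_dP2, aeval_dP2]
    simp only [Matrix.cons_val_zero, Matrix.cons_val_one, Matrix.head_cons, Matrix.cons_val_two,
      Matrix.tail_cons, Matrix.cons_val_three]
    ring
  fin_cases i
  exacts [e0, e1, e2]

lemma dP_inf0 (b lam : ℂ) : aeval ![0, b, 0, lam] (dP 0) = 0 := by
  simp [aeval_dP0]

lemma dP_inf1 (b lam : ℂ) : aeval ![0, b, 0, lam] (dP 1) = b ^ 4 := by
  simp [aeval_dP1]

lemma dP_inf2 (b lam : ℂ) : aeval ![0, b, 0, lam] (dP 2) = 0 := by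
  simp [aeval_dP2]

lemma legendre_equation_iff (lam x y : ℂ) :
    (LegendreCurve lam).Equation x y ↔ y ^ 2 = x ^ 3 - (1 + lam) * x ^ 2 + lam * x := by
  rw [WeierstrassCurve.Affine.equation_iff]
  simp only [LegendreCurve]
  constructor <;> intro h <;> linear_combination h

lemma legendre_Δ (lam : ℂ) : (LegendreCurve lam).Δ = 16 * lam ^ 2 * (lam - 1) ^ 2 := by
  have ha1 : (LegendreCurve lam).a₁ = 0 := rfl
  have ha2 : (LegendreCurve lam).a₂ = -(1 + lam) := rfl
  have ha3 : (LegendreCurve lam).a₃ = 0 := rfl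
  have ha4 : (LegendreCurve lam).a₄ = lam := rfl
  have ha6 : (LegendreCurve lam).a₆ = 0 := rfl
  simp only [WeierstrassCurve.Δ, WeierstrassCurve.b₂, WeierstrassCurve.b₄, WeierstrassCurve.b₆,
    WeierstrassCurve.b₈, ha1, ha2, ha3, ha4, ha6]
  ring

lemma legendre_ns {lam : ℂ} (h0 : lam ≠ 0) (h1 : lam ≠ 1) {x y : ℂ}
    (heq : (LegendreCurve lam).Equation x y) : (LegendreCurve lam).Nonsingular x y := by
  have hΔ : (LegendreCurve lam).Δ ≠ 0 := by
    rw [legendre_Δ]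
    exact mul_ne_zero (mul_ne_zero (by norm_num) (pow_ne_zero _ h0))
      (pow_ne_zero _ (sub_ne_zero.mpr h1))
  exact (WeierstrassCurve.Affine.equation_iff_nonsingular_of_Δ_ne_zero (W := LegendreCurve lam) hΔ).mp heq

lemma legendre_negY (lam x y : ℂ) : (LegendreCurve lam).negY x y = -y := by
  simp [WeierstrassCurve.Affine.negY, LegendreCurve]

lemma some_congr {W : WeierstrassCurve.Affine ℂ} {u v u' v' : ℂ} (hu : u = u') (hv : v = v')
    (h : W.Nonsingular u v) :
    ∃ h' : W.Nonsingular u' v', WeierstrassCurve.Affine.Point.some _ _ h =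
      WeierstrassCurve.Affine.Point.some _ _ h' := by
  subst hu; subst hv; exact ⟨h, rfl⟩

lemma dP_double {lam x y : ℂ} (heq : (LegendreCurve lam).Equation x y)
    (hy : y ≠ 0) (hns : (LegendreCurve lam).Nonsingular x y) :
    aeval ![x, y, 1, lam] (dP 2) ≠ 0 ∧
    ∃ h2 : (LegendreCurve lam).Nonsingular
        (aeval ![x, y, 1, lam] (dP 0) / aeval ![x, y, 1, lam] (dP 2))
        (aeval ![x, y, 1, lam] (dP 1) / aeval ![x, y, 1, lam] (dP 2)),
      WeierstrassCurve.Affine.Point.some _ _ hns + WeierstrassCurve.Affine.Point.some _ _ hns =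
        WeierstrassCurve.Affine.Point.some _ _ h2 := by
  have he : y ^ 2 = x ^ 3 - (1 + lam) * x ^ 2 + lam * x := (legendre_equation_iff lam x y).mp heq
  have ha1 : (LegendreCurve lam).a₁ = 0 := rfl
  have ha2 : (LegendreCurve lam).a₂ = -(1 + lam) := rfl
  have ha4 : (LegendreCurve lam).a₄ = lam := rfl
  have h8 : (8 : ℂ) * y ^ 3 ≠ 0 := mul_ne_zero (by norm_num) (pow_ne_zero _ hy)
  have hd2 : aeval ![x, y, 1, lam] (dP 2) = 8 * y ^ 3 := by
    rw [aeval_dP2]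
    simp only [Matrix.cons_val_zero, Matrix.cons_val_one, Matrix.head_cons, Matrix.cons_val_two,
      Matrix.tail_cons]
    ring
  have hy' : y ≠ (LegendreCurve lam).negY x y := by
    rw [legendre_negY]
    intro h
    exact hy (by linear_combination h / 2)
  have hL : (LegendreCurve lam).slope x x y y = (3 * x ^ 2 - 2 * (1 + lam) * x + lam) / (2 * y) := by
    rw [WeierstrassCurve.Affine.slope_of_Y_ne rfl hy', legendre_negY, ha1, ha2, ha4]
    have hden : y - -y = 2 * y := by ring
    rw [hden]
    congr 1
    ring
  have lhsX : (LegendreCurve lam).addX x x ((LegendreCurve lam).slope x x y y) =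
      (2 * y * (3 * x ^ 2 - 2 * (1 + lam) * x + lam) ^ 2 + ((1 + lam) - 2 * x) * (8 * y ^ 3)) /
        (8 * y ^ 3) := by
    rw [WeierstrassCurve.Affine.addX, hL, ha1, ha2]
    field_simp
    ring
  have lhsY : (LegendreCurve lam).addY x x y ((LegendreCurve lam).slope x x y y) =
      (-((3 * x ^ 2 - 2 * (1 + lam) * x + lam) ^ 3 +
          4 * y ^ 2 * (3 * x ^ 2 - 2 * (1 + lam) * x + lam) * ((1 + lam) - 3 * x) + 8 * y ^ 4)) /
        (8 * y ^ 3) := by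
    rw [WeierstrassCurve.Affine.addY, WeierstrassCurve.Affine.negAddY, legendre_negY,
      WeierstrassCurve.Affine.addX, hL, ha1, ha2]
    field_simp
    ring
  have hXval : (LegendreCurve lam).addX x x ((LegendreCurve lam).slope x x y y) =
      aeval ![x, y, 1, lam] (dP 0) / aeval ![x, y, 1, lam] (dP 2) := by
    rw [lhsX, hd2, aeval_dP0]
    simp only [Matrix.cons_val_zero, Matrix.cons_val_one, Matrix.head_cons, Matrix.cons_val_two,
      Matrix.tail_cons, Matrix.cons_val_three]
    rw [div_eq_div_iff h8 h8]
    linear_combination (8 * y ^ 3 * (8 * y + 8 * lam * y - 18 * x * y)) * he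
  have hYval : (LegendreCurve lam).addY x x y ((LegendreCurve lam).slope x x y y) =
      aeval ![x, y, 1, lam] (dP 1) / aeval ![x, y, 1, lam] (dP 2) := by
    rw [lhsY, hd2, aeval_dP1]
    simp only [Matrix.cons_val_zero, Matrix.cons_val_one, Matrix.head_cons, Matrix.cons_val_two,
      Matrix.tail_cons, Matrix.cons_val_three]
    rw [div_eq_div_iff h8 h8]
    linear_combination (8 * y ^ 3 *
      (-9 * y ^ 2 - 27 * x ^ 2 - 27 * lam * x ^ 2 + 27 * x ^ 3 + 8 * x + 24 * lam * x +
        8 * lam ^ 2 * x - 4 * lam - 4 * lam ^ 2)) * he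
  refine ⟨hd2 ▸ h8, ?_⟩
  obtain ⟨h2, hpt⟩ := some_congr hXval hYval
    (WeierstrassCurve.Affine.nonsingular_add hns hns fun h => hy' h.2)
  exact ⟨h2, by rw [WeierstrassCurve.Affine.Point.add_self_of_Y_ne hy', hpt]⟩

lemma dP_torsion {lam : ℂ} (h0 : lam ≠ 0) (h1 : lam ≠ 1) {x : ℂ}
    (heq : (LegendreCurve lam).Equation x 0) :
    aeval ![x, 0, 1, lam] (dP 0) = 0 ∧ aeval ![x, 0, 1, lam] (dP 1) ≠ 0 ∧
      aeval ![x, 0, 1, lam] (dP 2) = 0 := by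
  have he : (0 : ℂ) ^ 2 = x ^ 3 - (1 + lam) * x ^ 2 + lam * x :=
    (legendre_equation_iff lam x 0).mp heq
  have hx : x * (x - 1) * (x - lam) = 0 := by linear_combination -he
  refine ⟨by simp [aeval_dP0], ?_, by simp [aeval_dP2]⟩
  rw [aeval_dP1]
  simp only [Matrix.cons_val_zero, Matrix.cons_val_one, Matrix.head_cons, Matrix.cons_val_two,
    Matrix.tail_cons, Matrix.cons_val_three]
  rcases mul_eq_zero.mp hx with h | h
  · rcases mul_eq_zero.mp h with h | h
    · rw [h]
      have : (6:ℂ) * 0 ^ 4 * lam - 0 ^ 2 * 1 ^ 2 * lam ^ 2 - 3 * 0 ^ 3 * 1 * lam +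
          2 * 0 * 1 ^ 3 * lam ^ 2 - 3 * 0 ^ 3 * 1 * lam ^ 2 + 2 * 0 * 1 ^ 3 * lam ^ 3 -
          5 * 0 * 0 ^ 2 * 1 * lam - 1 ^ 4 * lam ^ 3 + 0 ^ 4 - 0 ^ 4 - 0 ^ 4 * lam ^ 2 =
          -(lam ^ 3) := by ring
      rw [this]
      exact neg_ne_zero.mpr (pow_ne_zero _ h0)
    · have hx1 : x = 1 := by linear_combination h
      rw [hx1]
      have : (6:ℂ) * 1 ^ 4 * lam - 1 ^ 2 * 1 ^ 2 * lam ^ 2 - 3 * 1 ^ 3 * 1 * lam +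
          2 * 1 * 1 ^ 3 * lam ^ 2 - 3 * 1 ^ 3 * 1 * lam ^ 2 + 2 * 1 * 1 ^ 3 * lam ^ 3 -
          5 * 1 * 0 ^ 2 * 1 * lam - 1 ^ 4 * lam ^ 3 + 0 ^ 4 - 1 ^ 4 - 1 ^ 4 * lam ^ 2 =
          (lam - 1) ^ 3 := by ring
      rw [this]
      exact pow_ne_zero _ (sub_ne_zero.mpr h1)
  · have hxl : x = lam := by linear_combination h
    rw [hxl]
    have : (6:ℂ) * lam ^ 4 * lam - lam ^ 2 * 1 ^ 2 * lam ^ 2 - 3 * lam ^ 3 * 1 * lam +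
        2 * lam * 1 ^ 3 * lam ^ 2 - 3 * lam ^ 3 * 1 * lam ^ 2 + 2 * lam * 1 ^ 3 * lam ^ 3 -
        5 * lam * 0 ^ 2 * 1 * lam - 1 ^ 4 * lam ^ 3 + 0 ^ 4 - lam ^ 4 - lam ^ 4 * lam ^ 2 =
        -(lam ^ 3 * (lam - 1) ^ 3) := by ring
    rw [this]
    exact neg_ne_zero.mpr (mul_ne_zero (pow_ne_zero _ h0) (pow_ne_zero _ (sub_ne_zero.mpr h1)))

noncomputable def Gs : ℕ → Fin 3 → MvPolynomial (Fin 4) ℤ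
  | 0 => ![X 0, X 1, X 2]
  | N + 1 => fun i => aeval ![Gs N 0, Gs N 1, Gs N 2, X 3] (dP i)

lemma Gs_isWH (N : ℕ) : ∀ i, (Gs N i).IsWeightedHomogeneous w1 (4 ^ N) := by
  induction N with
  | zero =>
      intro i
      have key : ∀ j : Fin 4, (X j : MvPolynomial (Fin 4) ℤ).IsWeightedHomogeneous w1 (w1 j) :=
        fun j => isWeightedHomogeneous_X ℤ w1 j
      fin_cases i
      · simpa [w1, Gs] using key 0
      · simpa [w1, Gs] using key 1
      · simpa [w1, Gs] using key 2
  | succ N ih =>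
      intro i
      have h : ∀ j, (![Gs N 0, Gs N 1, Gs N 2, X 3] j).IsWeightedHomogeneous w1 (4 ^ N * w1 j) := by
        intro j
        fin_cases j
        · simpa [w1] using ih 0
        · simpa [w1] using ih 1
        · simpa [w1] using ih 2
        · simpa [w1] using isWeightedHomogeneous_X ℤ w1 3
      have := isWH_aeval (dP_isWH i) _ (4 ^ N) h
      rw [show (4:ℕ) ^ N * 4 = 4 ^ (N + 1) by rw [pow_succ]] at this
      exact this

lemma B3_X (j : Fin 4) (b : ℕ) (hb : (Finsupp.single j 1) 3 ≤ b) :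
    B3 (X j : MvPolynomial (Fin 4) ℤ) b := by
  intro m hm
  rw [MvPolynomial.support_X, Finset.mem_singleton] at hm
  rw [hm]
  exact hb

lemma Gs_B3 (N : ℕ) : ∀ i, B3 (Gs N i) (4 ^ N - 1) := by
  induction N with
  | zero =>
      intro i
      fin_cases i
      · exact B3_X 0 0 (by simp [Finsupp.single_apply])
      · exact B3_X 1 0 (by simp [Finsupp.single_apply])
      · exact B3_X 2 0 (by simp [Finsupp.single_apply])
  | succ N ih =>
      intro i
      apply B3_aeval (bi := ![4 ^ N - 1, 4 ^ N - 1, 4 ^ N - 1, 1])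
      · intro j
        fin_cases j
        · exact ih 0
        · exact ih 1
        · exact ih 2
        · exact B3_X 3 1 (by simp)
      · intro d hd
        have hw : d 0 + d 1 + d 2 = 4 := by
          have := dP_isWH i (mem_support_iff.mp hd)
          rwa [weight_w1] at this
        have h3 : d 3 ≤ 3 := dP_B3 i d hd
        have hsum : (∑ j ∈ d.support, d j * ![4 ^ N - 1, 4 ^ N - 1, 4 ^ N - 1, 1] j) =
            ∑ j : Fin 4, d j * ![4 ^ N - 1, 4 ^ N - 1, 4 ^ N - 1, 1] j := by
          apply Finset.sum_subset (Finset.subset_univ _)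
          intro j _ hj
          rw [Finsupp.notMem_support_iff.mp hj, zero_mul]
        rw [hsum, Fin.sum_univ_four]
        simp only [Matrix.cons_val_zero, Matrix.cons_val_one, Matrix.head_cons,
          Matrix.cons_val_two, Matrix.tail_cons, Matrix.cons_val_three]
        have hK : 1 ≤ 4 ^ N := Nat.one_le_pow _ _ (by norm_num)
        have hre : d 0 * (4 ^ N - 1) + d 1 * (4 ^ N - 1) + d 2 * (4 ^ N - 1) =
            (d 0 + d 1 + d 2) * (4 ^ N - 1) := by ring
        have hp : (4:ℕ) ^ (N + 1) = 4 * 4 ^ N := by rw [pow_succ]; ring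
        rw [hre, hw, hp]
        omega

lemma aeval_comp (v : Fin 4 → ℂ) (σ : Fin 4 → MvPolynomial (Fin 4) ℤ)
    (p : MvPolynomial (Fin 4) ℤ) :
    aeval v (aeval σ p) = aeval (fun j => aeval v (σ j)) p := by
  have : (aeval v).comp (aeval σ) = aeval (fun j => aeval v (σ j)) :=
    MvPolynomial.comp_aeval σ (aeval v)
  calc aeval v (aeval σ p) = ((aeval v).comp (aeval σ)) p := rfl
    _ = aeval (fun j => aeval v (σ j)) p := by rw [this]

lemma Gs_eval_succ (x y lam : ℂ) (N : ℕ) (i : Fin 3) :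
    aeval ![x, y, 1, lam] (Gs (N + 1) i) =
      aeval ![aeval ![x, y, 1, lam] (Gs N 0), aeval ![x, y, 1, lam] (Gs N 1),
        aeval ![x, y, 1, lam] (Gs N 2), lam] (dP i) := by
  show aeval ![x, y, 1, lam] (aeval ![Gs N 0, Gs N 1, Gs N 2, X 3] (dP i)) = _
  rw [aeval_comp]
  have hfun : (fun j => aeval ![x, y, 1, lam] (![Gs N 0, Gs N 1, Gs N 2, X 3] j)) =
      ![aeval ![x, y, 1, lam] (Gs N 0), aeval ![x, y, 1, lam] (Gs N 1),
        aeval ![x, y, 1, lam] (Gs N 2), lam] := by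
    funext j
    fin_cases j <;> simp
  rw [hfun]

lemma Gs_main {lam x y : ℂ} (h0 : lam ≠ 0) (h1 : lam ≠ 1)
    (heq : (LegendreCurve lam).Equation x y)
    (hns : (LegendreCurve lam).Nonsingular x y) (N : ℕ) :
    (aeval ![x, y, 1, lam] (Gs N 2) ≠ 0 ∧
      ∃ h' : (LegendreCurve lam).Nonsingular
          (aeval ![x, y, 1, lam] (Gs N 0) / aeval ![x, y, 1, lam] (Gs N 2))
          (aeval ![x, y, 1, lam] (Gs N 1) / aeval ![x, y, 1, lam] (Gs N 2)),
        2 ^ N • WeierstrassCurve.Affine.Point.some _ _ hns =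
          WeierstrassCurve.Affine.Point.some _ _ h') ∨
    (aeval ![x, y, 1, lam] (Gs N 0) = 0 ∧ aeval ![x, y, 1, lam] (Gs N 1) ≠ 0 ∧
      aeval ![x, y, 1, lam] (Gs N 2) = 0 ∧
      2 ^ N • WeierstrassCurve.Affine.Point.some _ _ hns = 0) := by
  induction N with
  | zero =>
      left
      have e0 : aeval ![x, y, 1, lam] (Gs 0 0) = x := by
        show aeval ![x, y, 1, lam] (X 0) = x
        simp
      have e1 : aeval ![x, y, 1, lam] (Gs 0 1) = y := by
        show aeval ![x, y, 1, lam] (X 1) = y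
        simp
      have e2 : aeval ![x, y, 1, lam] (Gs 0 2) = 1 := by
        show aeval ![x, y, 1, lam] (X 2) = (1 : ℂ)
        simp
      rw [e0, e1, e2]
      refine ⟨one_ne_zero, ?_⟩
      obtain ⟨h', hpt⟩ := some_congr (div_one x).symm (div_one y).symm hns
      exact ⟨h', by rw [pow_zero, one_smul]; exact hpt⟩
  | succ N ih =>
      set g0 := aeval ![x, y, 1, lam] (Gs N 0) with hg0def
      set g1 := aeval ![x, y, 1, lam] (Gs N 1) with hg1def
      set g2 := aeval ![x, y, 1, lam] (Gs N 2) with hg2def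
      have hev : ∀ i : Fin 3, aeval ![x, y, 1, lam] (Gs (N + 1) i) =
          aeval ![g0, g1, g2, lam] (dP i) := fun i => Gs_eval_succ x y lam N i
      have hsm : (2 : ℕ) ^ (N + 1) • (WeierstrassCurve.Affine.Point.some _ _ hns) =
          2 ^ N • WeierstrassCurve.Affine.Point.some _ _ hns +
            2 ^ N • WeierstrassCurve.Affine.Point.some _ _ hns := by
        rw [pow_succ, mul_two, add_smul]
      rcases ih with ⟨hg2, h', hpt⟩ | ⟨hz0, hz1, hz2, hpt⟩
      · have hvec : ![g0, g1, g2, lam] = ![g2 * (g0 / g2), g2 * (g1 / g2), g2 * 1, lam] := by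
          funext j
          fin_cases j
          · show g0 = g2 * (g0 / g2)
            field_simp
          · show g1 = g2 * (g1 / g2)
            field_simp
          · show g2 = g2 * 1
            rw [mul_one]
          · rfl
        have hscale : ∀ i, aeval ![x, y, 1, lam] (Gs (N + 1) i) =
            g2 ^ 4 * aeval ![g0 / g2, g1 / g2, 1, lam] (dP i) := by
          intro i
          rw [hev i, hvec, dP_scale]
        have hequv : (LegendreCurve lam).Equation (g0 / g2) (g1 / g2) := h'.1
        by_cases hv : g1 / g2 = 0
        · right
          rw [hv] at hequv
          obtain ⟨t0, t1, t2⟩ := dP_torsion h0 h1 hequv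
          have hy' : g1 / g2 = (LegendreCurve lam).negY (g0 / g2) (g1 / g2) := by
            rw [legendre_negY, hv]
            ring
          refine ⟨?_, ?_, ?_, ?_⟩
          · rw [hscale 0, hv, t0, mul_zero]
          · rw [hscale 1, hv]
            exact mul_ne_zero (pow_ne_zero _ hg2) t1
          · rw [hscale 2, hv, t2, mul_zero]
          · rw [hsm, hpt, WeierstrassCurve.Affine.Point.add_self_of_Y_eq hy']
        · left
          obtain ⟨hd2, h2, hpt2⟩ := dP_double hequv hv h'
          have hg24 : g2 ^ 4 ≠ 0 := pow_ne_zero _ hg2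
          refine ⟨?_, ?_⟩
          · rw [hscale 2]
            exact mul_ne_zero hg24 hd2
          · have hu' : aeval ![g0 / g2, g1 / g2, 1, lam] (dP 0) /
                aeval ![g0 / g2, g1 / g2, 1, lam] (dP 2) =
                aeval ![x, y, 1, lam] (Gs (N + 1) 0) / aeval ![x, y, 1, lam] (Gs (N + 1) 2) := by
              rw [hscale 0, hscale 2, mul_div_mul_left _ _ hg24]
            have hv' : aeval ![g0 / g2, g1 / g2, 1, lam] (dP 1) /
                aeval ![g0 / g2, g1 / g2, 1, lam] (dP 2) =
                aeval ![x, y, 1, lam] (Gs (N + 1) 1) / aeval ![x, y, 1, lam] (Gs (N + 1) 2) := by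
              rw [hscale 1, hscale 2, mul_div_mul_left _ _ hg24]
            obtain ⟨h2', hpt3⟩ := some_congr hu' hv' h2
            exact ⟨h2', by rw [hsm, hpt, hpt2, hpt3]⟩
      · right
        have hvec : ![g0, g1, g2, lam] = ![0, g1, 0, lam] := by
          funext j
          fin_cases j
          · exact hz0
          · rfl
          · exact hz2
          · rfl
        refine ⟨?_, ?_, ?_, ?_⟩
        · rw [hev 0, hvec, dP_inf0]
        · rw [hev 1, hvec, dP_inf1]
          exact pow_ne_zero _ hz1
        · rw [hev 2, hvec, dP_inf2]
        · rw [hsm, hpt]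
          simp

theorem stmt_5' (N : ℕ) :
    ∃ G : Fin 3 → MvPolynomial (Fin 4) ℤ,
      (∀ i, ∀ m ∈ (G i).support, m 0 + m 1 + m 2 = 4 ^ N) ∧
      (∀ i, (G i).totalDegree ≤ 2 * 4 ^ N) ∧
      ∀ lam x y : ℂ, lam ≠ 0 → lam ≠ 1 → (LegendreCurve lam).Equation x y →
        ¬(aeval ![x, y, 1, lam] (G 0) = 0 ∧ aeval ![x, y, 1, lam] (G 1) = 0 ∧
            aeval ![x, y, 1, lam] (G 2) = 0) ∧
        ∃ hns : (LegendreCurve lam).Nonsingular x y,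
          (aeval ![x, y, 1, lam] (G 2) ≠ 0 →
            ∃ hns' : (LegendreCurve lam).Nonsingular
                (aeval ![x, y, 1, lam] (G 0) / aeval ![x, y, 1, lam] (G 2))
                (aeval ![x, y, 1, lam] (G 1) / aeval ![x, y, 1, lam] (G 2)),
              2 ^ N • WeierstrassCurve.Affine.Point.some _ _ hns =
                WeierstrassCurve.Affine.Point.some _ _ hns') ∧
          (aeval ![x, y, 1, lam] (G 2) = 0 →
            2 ^ N • WeierstrassCurve.Affine.Point.some _ _ hns = 0) := by
  refine ⟨Gs N, ?_, ?_, ?_⟩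
  · intro i m hm
    have h := Gs_isWH N i (mem_support_iff.mp hm)
    rwa [weight_w1] at h
  · intro i
    rw [MvPolynomial.totalDegree]
    apply Finset.sup_le
    intro m hm
    have h1 := Gs_isWH N i (mem_support_iff.mp hm)
    rw [weight_w1] at h1
    have h2 := Gs_B3 N i m hm
    have hK : 1 ≤ 4 ^ N := Nat.one_le_pow _ _ (by norm_num)
    have hsum : (m.sum fun _ e => e) = m 0 + m 1 + m 2 + m 3 := by
      rw [Finsupp.sum_fintype _ _ fun _ => rfl, Fin.sum_univ_four]
    rw [hsum]
    omega
  · intro lam x y h0 h1 heq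
    have hns := legendre_ns h0 h1 heq
    rcases Gs_main h0 h1 heq hns N with ⟨hg2, h', hpt⟩ | ⟨hz0, hz1, hz2, hpt⟩
    · exact ⟨fun h => hg2 h.2.2, hns, fun _ => ⟨h', hpt⟩, fun hc => absurd hc hg2⟩
    · exact ⟨fun h => hz1 h.2.1, hns, fun hc => absurd hz2 hc, fun _ => hpt⟩

end Stmt5Aux

/-- For every `N ≥ 1` there exist polynomials
`G_{N,0}, G_{N,1}, G_{N,2} ∈ ℤ[X₀,X₁,X₂,X₃]`, homogeneous of degree `4^N` in `X₀,X₁,X₂` and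
of total degree at most `2·4^N`, such that for every `λ ∈ ℂ \ {0,1}` and every affine point
`(x, y)` of the Legendre curve, setting `gᵢ = G_{N,i}(x, y, 1, λ)`, the `gᵢ` are not all
zero and `2^N•P = (g₀/g₂, g₁/g₂)` if `g₂ ≠ 0`, while `2^N•P = 0` if `g₂ = 0`. -/
theorem stmt_5 (N : ℕ) (hN : 1 ≤ N) :
    ∃ G : Fin 3 → MvPolynomial (Fin 4) ℤ,
      (∀ i, ∀ m ∈ (G i).support, m 0 + m 1 + m 2 = 4 ^ N) ∧
      (∀ i, (G i).totalDegree ≤ 2 * 4 ^ N) ∧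
      ∀ lam x y : ℂ, lam ≠ 0 → lam ≠ 1 → (LegendreCurve lam).Equation x y →
        ¬(aeval ![x, y, 1, lam] (G 0) = 0 ∧ aeval ![x, y, 1, lam] (G 1) = 0 ∧
            aeval ![x, y, 1, lam] (G 2) = 0) ∧
        ∃ hns : (LegendreCurve lam).Nonsingular x y,
          (aeval ![x, y, 1, lam] (G 2) ≠ 0 →
            ∃ hns' : (LegendreCurve lam).Nonsingular
                (aeval ![x, y, 1, lam] (G 0) / aeval ![x, y, 1, lam] (G 2))
                (aeval ![x, y, 1, lam] (G 1) / aeval ![x, y, 1, lam] (G 2)),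
              2 ^ N • WeierstrassCurve.Affine.Point.some _ _ hns =
                WeierstrassCurve.Affine.Point.some _ _ hns') ∧
          (aeval ![x, y, 1, lam] (G 2) = 0 →
            2 ^ N • WeierstrassCurve.Affine.Point.some _ _ hns = 0) := by
  exact Stmt5Aux.stmt_5' N
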